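/- Let α, β ∈ ℂ and let u, v, w be nonzero complex numbers satisfying u v w = α v + β (one step of the QRT map associated to Somos-5). Then the biquadratic expression J(u, v) := u + v + α (1/u + 1/v) + β/(u v) is invariant: J(v, w) = J(u, v). -/

import Mathlib

/-- One step of the QRT map associated to Somos-5 preserves the biquadratic
first integral `J(u,v) = u + v + α (1/u + 1/v) + β/(uv)`. -/
theorem somos5_qrt_biquadratic_invariant (α β u v w : ℂ)
    (hu : u ≠ 0) (hv : v ≠ 0) (hw : w ≠ 0)
    (h : u * v * w = α * v + β) :
    v + w + α * (1 / v + 1 / w) + β / (v * w) =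
      u + v + α * (1 / u + 1 / v) + β / (u * v) := by
  field_simp
  linear_combination (w - u) * h
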